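/- The category HSS(H,θ) of heterogeneous substitution systems is a replete subcategory of the category of (Id + H)-algebras: given a substitution system (T,α,⦃−⦄), an algebra (T',α'), and an algebra isomorphism β : (T,α) → (T',α'), then (T',α') carries a (necessarily unique) bracket operation, defined for f : (Z,e) → (T',η') by ⦃f⦄' := β ∘ ⦃β^{-1} ∘ f⦄ ∘ (β^{-1}·Z), and β is compatible with the brackets (i.e., β ∘ ⦃g⦄ = ⦃β ∘ g⦄' ∘ (β·Z) for all pointed g : (Z,e) → (T,η)). -/

import Mathlib

open CategoryTheory Limits

universe v u

/-- A pointed endofunctor on `C`. -/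
structure Ptd (C : Type u) [Category.{v} C] where
  Z : C ⥤ C
  e : 𝟭 C ⟶ Z

/-- A *signature* over `C`: an endofunctor `H` on the endofunctor category `[C,C]`
together with a strength `θ : (H −)·U∼ ⟶ H (−·U∼)`, natural in both variables and
satisfying the unit and composition coherence laws (here `X·Z` is the composite
`Z ⋙ X`, i.e. `A ↦ X (Z A)`). -/
structure Signature (C : Type u) [Category.{v} C] where
  H : (C ⥤ C) ⥤ (C ⥤ C)
  θ : ∀ (X : C ⥤ C) (Z : Ptd C), (Z.Z ⋙ H.obj X) ⟶ H.obj (Z.Z ⋙ X)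
  θ_nat_X : ∀ {X X' : C ⥤ C} (α : X ⟶ X') (Z : Ptd C),
      Functor.whiskerLeft Z.Z (H.map α) ≫ θ X' Z = θ X Z ≫ H.map (Functor.whiskerLeft Z.Z α)
  θ_nat_Z : ∀ (X : C ⥤ C) {Z Z' : Ptd C} (g : Z.Z ⟶ Z'.Z), Z.e ≫ g = Z'.e →
      Functor.whiskerRight g (H.obj X) ≫ θ X Z' = θ X Z ≫ H.map (Functor.whiskerRight g X)
  θ_id : ∀ X : C ⥤ C,
      θ X ⟨𝟭 C, 𝟙 (𝟭 C)⟩ =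
        (Functor.leftUnitor (H.obj X)).hom ≫ H.map (Functor.leftUnitor X).inv
  θ_comp : ∀ (X : C ⥤ C) (Z Z' : Ptd C),
      θ X ⟨Z.Z ⋙ Z'.Z, Z.e ≫ Functor.whiskerLeft Z.Z Z'.e⟩ =
        (Functor.associator Z.Z Z'.Z (H.obj X)).hom ≫
          Functor.whiskerLeft Z.Z (θ X Z') ≫ θ (Z'.Z ⋙ X) Z ≫
          H.map (Functor.associator Z.Z Z'.Z X).inv

variable {C : Type u} [Category.{v} C]

/-- A *heterogeneous substitution system* for a signature `(H, θ)`: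
an `(Id + H)`-algebra, presented by its components `η : Id ⟶ T` and `τ : H T ⟶ T`,
together with, for every morphism of pointed endofunctors `f : (Z,e) ⟶ (T,η)`,
a unique bracket `⦃f⦄ : T·Z ⟶ T` satisfying the two substitution equations. -/
structure HSS (S : Signature C) where
  T : C ⥤ C
  η : 𝟭 C ⟶ T
  τ : S.H.obj T ⟶ T
  bracket : ∀ (Z : Ptd C) (f : Z.Z ⟶ T), Z.e ≫ f = η → (Z.Z ⋙ T ⟶ T)
  bracket_η : ∀ (Z : Ptd C) (f : Z.Z ⟶ T) (hf : Z.e ≫ f = η),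
      Functor.whiskerLeft Z.Z η ≫ bracket Z f hf = f
  bracket_τ : ∀ (Z : Ptd C) (f : Z.Z ⟶ T) (hf : Z.e ≫ f = η),
      Functor.whiskerLeft Z.Z τ ≫ bracket Z f hf = S.θ T Z ≫ S.H.map (bracket Z f hf) ≫ τ
  bracket_unique : ∀ (Z : Ptd C) (f : Z.Z ⟶ T) (hf : Z.e ≫ f = η)
      (h : Z.Z ⋙ T ⟶ T),
      Functor.whiskerLeft Z.Z η ≫ h = f →
      Functor.whiskerLeft Z.Z τ ≫ h = S.θ T Z ≫ S.H.map h ≫ τ →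
      h = bracket Z f hf

/-- The bracket transported along an algebra isomorphism `β : (T,α) ≅ (T',α')`:
`⦃f⦄' := β ∘ ⦃β⁻¹ ∘ f⦄ ∘ (β⁻¹ · Z)`. -/
def transportedBracket (S : Signature C) (hss : HSS S) {T' : C ⥤ C}
    (β : hss.T ≅ T') (Z : Ptd C) (f : Z.Z ⟶ T')
    (hg : Z.e ≫ (f ≫ β.inv) = hss.η) : Z.Z ⋙ T' ⟶ T' :=
  Functor.whiskerLeft Z.Z β.inv ≫ hss.bracket Z (f ≫ β.inv) hg ≫ β.hom

/-- **`HSS(H,θ)` is a replete subcategory of the category of `(Id+H)`-algebras**: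
given a substitution system `(T,α,⦃−⦄)`, an algebra `(T',α')` (presented by `η'`,
`τ'`), and an algebra isomorphism `β : (T,α) ≅ (T',α')`, the algebra `(T',α')`
carries a (necessarily unique) bracket operation, given by
`⦃f⦄' := β ∘ ⦃β⁻¹ ∘ f⦄ ∘ (β⁻¹ · Z)`, and `β` is compatible with the brackets on
either side. -/
theorem hss_replete (S : Signature C) (hss : HSS S)
    (T' : C ⥤ C) (η' : 𝟭 C ⟶ T') (τ' : S.H.obj T' ⟶ T')
    (β : hss.T ≅ T')
    (hβη : hss.η ≫ β.hom = η')
    (hβτ : hss.τ ≫ β.hom = S.H.map β.hom ≫ τ') :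
    (∀ (Z : Ptd C) (f : Z.Z ⟶ T') (hf : Z.e ≫ f = η')
        (hg : Z.e ≫ (f ≫ β.inv) = hss.η),
      -- `⦃f⦄'` satisfies the two bracket equations …
      (Functor.whiskerLeft Z.Z η' ≫ transportedBracket S hss β Z f hg = f) ∧
      (Functor.whiskerLeft Z.Z τ' ≫ transportedBracket S hss β Z f hg =
        S.θ T' Z ≫ S.H.map (transportedBracket S hss β Z f hg) ≫ τ') ∧
      -- … and is the unique such morphism
      (∀ h : Z.Z ⋙ T' ⟶ T',
        Functor.whiskerLeft Z.Z η' ≫ h = f →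
        Functor.whiskerLeft Z.Z τ' ≫ h = S.θ T' Z ≫ S.H.map h ≫ τ' →
        h = transportedBracket S hss β Z f hg)) ∧
    -- `β` is compatible with the brackets: `β ∘ ⦃g⦄ = ⦃β ∘ g⦄' ∘ (β · Z)`
    (∀ (Z : Ptd C) (g : Z.Z ⟶ hss.T) (hg : Z.e ≫ g = hss.η)
        (hg' : Z.e ≫ ((g ≫ β.hom) ≫ β.inv) = hss.η),
      hss.bracket Z g hg ≫ β.hom =
        Functor.whiskerLeft Z.Z β.hom ≫ transportedBracket S hss β Z (g ≫ β.hom) hg') := by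
  have hinvη : η' ≫ β.inv = hss.η := by rw [← hβη]; simp
  have hinvτ : τ' ≫ β.inv = S.H.map β.inv ≫ hss.τ := by
    rw [← cancel_epi (S.H.map β.hom), ← Category.assoc, ← hβτ]
    simp
  constructor
  · intro Z f hf hg
    refine ⟨?_, ?_, ?_⟩
    · -- η equation
      rw [transportedBracket, ← Category.assoc, ← Functor.whiskerLeft_comp, hinvη]
      rw [← Category.assoc, hss.bracket_η]
      simp
    · -- τ equation
      rw [transportedBracket, ← Category.assoc, ← Functor.whiskerLeft_comp, hinvτ]
      rw [Functor.whiskerLeft_comp, Category.assoc]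
      rw [← Category.assoc (Functor.whiskerLeft Z.Z hss.τ), hss.bracket_τ]
      have hnat := S.θ_nat_X β.inv Z
      rw [← Category.assoc, ← Category.assoc, ← Category.assoc, hnat]
      simp only [Category.assoc, hβτ]
      simp [transportedBracket, S.H.map_comp]
    · -- uniqueness
      intro h h1 h2
      have key : Functor.whiskerLeft Z.Z β.hom ≫ h ≫ β.inv =
          hss.bracket Z (f ≫ β.inv) hg := by
        apply hss.bracket_unique
        · rw [← Category.assoc, ← Functor.whiskerLeft_comp, hβη, ← Category.assoc, h1]
        · rw [← Category.assoc, ← Functor.whiskerLeft_comp, hβτ, Functor.whiskerLeft_comp,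
            Category.assoc, ← Category.assoc (Functor.whiskerLeft Z.Z τ'), h2]
          have hnat := S.θ_nat_X β.hom Z
          rw [← Category.assoc, ← Category.assoc, ← Category.assoc, hnat]
          simp only [Category.assoc, hinvτ]
          simp [S.H.map_comp]
      rw [transportedBracket, ← key]
      simp only [Category.assoc, Iso.inv_hom_id, Category.comp_id]
      rw [← Category.assoc, ← Functor.whiskerLeft_comp]
      simp
  · intro Z g hg hg'
    have : hss.bracket Z ((g ≫ β.hom) ≫ β.inv) hg' = hss.bracket Z g hg := by
      apply hss.bracket_unique
      · rw [hss.bracket_η]; simp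
      · exact hss.bracket_τ _ _ _
    rw [transportedBracket, this, ← Category.assoc, ← Functor.whiskerLeft_comp]
    simp
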